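/- Let P = (p₀, p₁, …, p_h) be a maximal simple oriented path in a planar directed network N in a disk (no sources or sinks in the interior, boundary sources and sinks). If P is unequivocal (there is no oriented path (p_k, q₁, …, q_t, p_ℓ) in N with all q_s distinct from all p_r), then any other directed path R in N from a boundary vertex s to a boundary vertex t, with s, t both distinct from the endpoints of P, intersects P in at most one contiguous interval; moreover the first meeting vertex of R with P (along R) has two incoming and one outgoing edge, and the last common vertex has one incoming and two outgoing edges. -/

import Mathlib

open scoped unitInterval

/-- A planar directed network in a disk: a finite directed graph whose vertices are
embedded in the closed unit disk of the plane (univalent boundary vertices on the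
bounding circle), with each directed edge realized by an injective curve in the disk,
curves of distinct edges meeting only at common endpoints and edge interiors avoiding
all vertices. -/
structure DiskNetwork (V : Type) [Fintype V] [DecidableEq V] where
  /-- the directed adjacency relation (edges) -/
  adj : V → V → Bool
  /-- the embedding of the vertices into the plane -/
  pos : V → EuclideanSpace ℝ (Fin 2)
  pos_mem : ∀ v, pos v ∈ Metric.closedBall (0 : EuclideanSpace ℝ (Fin 2)) 1
  pos_inj : Function.Injective pos
  /-- each directed edge is realized by a curve in the disk -/
  edgePath : ∀ u v, adj u v = true → Path (pos u) (pos v)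
  edge_in_disk : ∀ u v (h : adj u v = true) (t : I),
    edgePath u v h t ∈ Metric.closedBall (0 : EuclideanSpace ℝ (Fin 2)) 1
  edge_inj : ∀ u v (h : adj u v = true), Function.Injective (edgePath u v h)
  /-- curves of distinct edges meet only at common endpoints -/
  edges_disjoint : ∀ u v (h : adj u v = true) u' v' (h' : adj u' v' = true),
    (u, v) ≠ (u', v') → ∀ s t : I, s ≠ 0 → s ≠ 1 →
      edgePath u v h s ≠ edgePath u' v' h' t
  /-- the interior of an edge avoids every vertex -/
  edge_interior_avoids_vertices : ∀ u v (h : adj u v = true) (t : I),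
    t ≠ 0 → t ≠ 1 → ∀ w, edgePath u v h t ≠ pos w

namespace DiskNetwork

variable {V : Type} [Fintype V] [DecidableEq V] (N : DiskNetwork V)

/-- a boundary vertex is one lying on the bounding circle of the disk -/
def boundary (v : V) : Prop := ‖N.pos v‖ = 1

/-- number of incoming edges -/
def inDeg (v : V) : ℕ := (Finset.univ.filter fun u => N.adj u v = true).card

/-- number of outgoing edges -/
def outDeg (v : V) : ℕ := (Finset.univ.filter fun u => N.adj v u = true).card

/-- a boundary source -/
def isSource (v : V) : Prop := N.boundary v ∧ N.inDeg v = 0 ∧ N.outDeg v = 1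

/-- a boundary sink -/
def isSink (v : V) : Prop := N.boundary v ∧ N.inDeg v = 1 ∧ N.outDeg v = 0

/-- boundary vertices are univalent; every internal vertex is trivalent, either
'black' (two incoming, one outgoing) or 'white' (one incoming, two outgoing); in
particular there are no sources or sinks in the interior -/
def IsValid : Prop :=
  (∀ v, N.boundary v → N.inDeg v + N.outDeg v = 1) ∧
    ∀ v, ¬ N.boundary v →
      (N.inDeg v = 2 ∧ N.outDeg v = 1) ∨ (N.inDeg v = 1 ∧ N.outDeg v = 2)

/-- a directed walk, as a nonempty list of consecutively adjacent vertices -/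
def IsDirPath (L : List V) : Prop :=
  L ≠ [] ∧ L.Chain' fun u v => N.adj u v = true

/-- `P` is unequivocal: there is no oriented path `(p_k, q₁, …, q_t, p_ℓ)` with
`t ≥ 1` and all `q_s` distinct from all vertices of `P`. -/
def Unequivocal (P : List V) : Prop :=
  ¬ ∃ (a b : V) (M : List V), M ≠ [] ∧ a ∈ P ∧ b ∈ P ∧ (∀ x ∈ M, x ∉ P) ∧
      (a :: (M ++ [b])).Chain' fun u v => N.adj u v = true

end DiskNetwork


section AuxStmt19

variable {V : Type} [Fintype V] [DecidableEq V]

lemma aux_inDeg_pos (N : DiskNetwork V) {u v : V} (h : N.adj u v = true) :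
    1 ≤ N.inDeg v :=
  Finset.card_pos.mpr ⟨u, by simp [h]⟩

lemma aux_outDeg_pos (N : DiskNetwork V) {u v : V} (h : N.adj v u = true) :
    1 ≤ N.outDeg v :=
  Finset.card_pos.mpr ⟨u, by simp [h]⟩

lemma aux_inDeg_two (N : DiskNetwork V) {u1 u2 v : V} (h1 : N.adj u1 v = true)
    (h2 : N.adj u2 v = true) (hne : u1 ≠ u2) : 2 ≤ N.inDeg v :=
  Finset.one_lt_card.mpr ⟨u1, by simp [h1], u2, by simp [h2], hne⟩

lemma aux_outDeg_two (N : DiskNetwork V) {u1 u2 v : V} (h1 : N.adj v u1 = true)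
    (h2 : N.adj v u2 = true) (hne : u1 ≠ u2) : 2 ≤ N.outDeg v :=
  Finset.one_lt_card.mpr ⟨u1, by simp [h1], u2, by simp [h2], hne⟩

/-- a vertex of a directed path which is not the head has a predecessor on the path -/
lemma aux_pred (N : DiskNetwork V) {P : List V}
    (hch : P.Chain' fun u v => N.adj u v = true) {v : V} (hPne : P ≠ [])
    (hv : v ∈ P) (hne : v ≠ P.head hPne) : ∃ u ∈ P, N.adj u v = true := by
  obtain ⟨r, hr, hrv⟩ := List.mem_iff_getElem.mp hv
  have hr0 : r ≠ 0 := by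
    rintro rfl
    exact hne (by rw [List.head_eq_getElem, hrv])
  refine ⟨P[r - 1], List.getElem_mem _, ?_⟩
  have := List.isChain_iff_getElem.mp hch (r - 1) (by omega)
  have hrr : r - 1 + 1 = r := by omega
  simp only [hrr] at this
  rwa [hrv] at this

/-- a vertex of a directed path which is not the last has a successor on the path -/
lemma aux_succ (N : DiskNetwork V) {P : List V}
    (hch : P.Chain' fun u v => N.adj u v = true) {v : V} (hPne : P ≠ [])
    (hv : v ∈ P) (hne : v ≠ P.getLast hPne) : ∃ u ∈ P, N.adj v u = true := by
  obtain ⟨r, hr, hrv⟩ := List.mem_iff_getElem.mp hv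
  have hr0 : r ≠ P.length - 1 := by
    rintro rfl
    exact hne (by rw [List.getLast_eq_getElem, hrv])
  refine ⟨P[r + 1], List.getElem_mem (by omega), ?_⟩
  have := List.isChain_iff_getElem.mp hch r (by omega)
  rwa [hrv] at this

end AuxStmt19

/-- let `P` be a maximal simple oriented path in a planar directed
network `N` in a disk.  If `P` is unequivocal, then any other directed path `R` in `N`
from a boundary vertex `s` to a boundary vertex `t`, with `s`, `t` both distinct from
the endpoints of `P`, intersects `P` in at most one contiguous interval; moreover the
first meeting vertex of `R` with `P` (along `R`) has two incoming and one outgoing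
edge, and the last common vertex has one incoming and two outgoing edges. -/

theorem stmt19 {V : Type} [Fintype V] [DecidableEq V] (N : DiskNetwork V)
    (hvalid : N.IsValid)
    (P : List V) (hP : N.IsDirPath P) (hPnd : P.Nodup)
    (hPsrc : ∀ h : P ≠ [], N.isSource (P.head h))
    (hPsnk : ∀ h : P ≠ [], N.isSink (P.getLast h))
    (hPuneq : N.Unequivocal P)
    (R : List V) (hR : N.IsDirPath R) (hRnd : R.Nodup)
    (hRsrc : ∀ h : R ≠ [], N.boundary (R.head h) ∧
      ∀ hp : P ≠ [], R.head h ≠ P.head hp ∧ R.head h ≠ P.getLast hp)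
    (hRsnk : ∀ h : R ≠ [], N.boundary (R.getLast h) ∧
      ∀ hp : P ≠ [], R.getLast h ≠ P.head hp ∧ R.getLast h ≠ P.getLast hp) :
    (∀ x ∈ R, x ∉ P) ∨
      ∃ i j : Fin R.length, i ≤ j ∧
        (∀ m : Fin R.length, R.get m ∈ P ↔ i ≤ m ∧ m ≤ j) ∧
        (N.inDeg (R.get i) = 2 ∧ N.outDeg (R.get i) = 1) ∧
        (N.inDeg (R.get j) = 1 ∧ N.outDeg (R.get j) = 2) := by
  classical
  by_cases hmeet : ∀ x ∈ R, x ∉ P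
  · exact Or.inl hmeet
  right
  push_neg at hmeet
  obtain ⟨x, hxR, hxP⟩ := hmeet
  have hRne : R ≠ [] := hR.1
  have hPne : P ≠ [] := List.ne_nil_of_mem hxP
  have hchR := hR.2
  have hchP := hP.2
  have hn : 0 < R.length := List.length_pos_iff.mpr hRne
  -- the head and last of R are not on P
  have hheadP : R.head hRne ∉ P := by
    intro hmem
    have hdeg := hvalid.1 _ (hRsrc hRne).1
    obtain ⟨u, _, hu⟩ := aux_pred N hchP hPne hmem ((hRsrc hRne).2 hPne).1
    obtain ⟨w, _, hw⟩ := aux_succ N hchP hPne hmem ((hRsrc hRne).2 hPne).2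
    have := aux_inDeg_pos N hu
    have := aux_outDeg_pos N hw
    omega
  have hlastP : R.getLast hRne ∉ P := by
    intro hmem
    have hdeg := hvalid.1 _ (hRsnk hRne).1
    obtain ⟨u, _, hu⟩ := aux_pred N hchP hPne hmem ((hRsnk hRne).2 hPne).1
    obtain ⟨w, _, hw⟩ := aux_succ N hchP hPne hmem ((hRsnk hRne).2 hPne).2
    have := aux_inDeg_pos N hu
    have := aux_outDeg_pos N hw
    omega
  -- the set of indices of R lying on P
  set S : Finset (Fin R.length) := Finset.univ.filter (fun m => R.get m ∈ P) with hSdef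
  have hmemS : ∀ m : Fin R.length, m ∈ S ↔ R.get m ∈ P := by
    intro m; simp [hSdef]
  have hSne : S.Nonempty := by
    obtain ⟨r, hr, hrx⟩ := List.mem_iff_getElem.mp hxR
    exact ⟨⟨r, hr⟩, (hmemS _).mpr (by simpa [hrx] using hxP)⟩
  set i : Fin R.length := S.min' hSne with hidef
  set j : Fin R.length := S.max' hSne with hjdef
  have hiS : R.get i ∈ P := (hmemS _).mp (S.min'_mem hSne)
  have hjS : R.get j ∈ P := (hmemS _).mp (S.max'_mem hSne)
  have hmin : ∀ m : Fin R.length, R.get m ∈ P → i ≤ m :=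
    fun m hm => S.min'_le m ((hmemS m).mpr hm)
  have hmax : ∀ m : Fin R.length, R.get m ∈ P → m ≤ j :=
    fun m hm => S.le_max' m ((hmemS m).mpr hm)
  have hij : i ≤ j := hmax i hiS
  have hi0 : (i : ℕ) ≠ 0 := by
    intro h0
    apply hheadP
    rw [List.head_eq_getElem]
    have : R.get i = R[0] := by simp [h0]
    rwa [this] at hiS
  have hjn : (j : ℕ) < R.length - 1 := by
    have hj1 : (j : ℕ) ≠ R.length - 1 := by
      intro h0
      apply hlastP
      rw [List.getLast_eq_getElem]
      have : R.get j = R[R.length - 1] := by simp [h0]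
      rwa [this] at hjS
    have := j.isLt
    omega
  -- contiguity, from unequivocality
  have hcont : ∀ m : Fin R.length, i ≤ m → m ≤ j → R.get m ∈ P := by
    intro m him hmj
    by_contra hmP
    have hmS : m ∉ S := fun h => hmP ((hmemS m).mp h)
    have hTne : (S.filter (· ≤ m)).Nonempty :=
      ⟨i, Finset.mem_filter.mpr ⟨S.min'_mem hSne, him⟩⟩
    have hUne : (S.filter (m ≤ ·)).Nonempty :=
      ⟨j, Finset.mem_filter.mpr ⟨S.max'_mem hSne, hmj⟩⟩
    set k : Fin R.length := (S.filter (· ≤ m)).max' hTne with hkdef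
    set l : Fin R.length := (S.filter (m ≤ ·)).min' hUne with hldef
    have hkT := Finset.mem_filter.mp ((S.filter (· ≤ m)).max'_mem hTne)
    have hlU := Finset.mem_filter.mp ((S.filter (m ≤ ·)).min'_mem hUne)
    have hkP : R.get k ∈ P := (hmemS _).mp hkT.1
    have hlP : R.get l ∈ P := (hmemS _).mp hlU.1
    have hkm : k < m := lt_of_le_of_ne hkT.2 (fun h => hmS (h ▸ hkT.1))
    have hml : m < l := lt_of_le_of_ne hlU.2 (fun h => hmS (h ▸ hlU.1))
    have hgap : ∀ r : Fin R.length, k < r → r < l → R.get r ∉ P := by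
      intro r hkr hrl hrP
      rcases le_total r m with hrm | hmr
      · exact absurd ((S.filter (· ≤ m)).le_max' r
          (Finset.mem_filter.mpr ⟨(hmemS r).mpr hrP, hrm⟩)) (not_le.mpr hkr)
      · exact absurd ((S.filter (m ≤ ·)).min'_le r
          (Finset.mem_filter.mpr ⟨(hmemS r).mpr hrP, hmr⟩)) (not_le.mpr hrl)
    -- build the forbidden detour
    set kk : ℕ := (k : ℕ) with hkk
    set ll : ℕ := (l : ℕ) with hll
    have hk2 : kk + 2 ≤ ll := by
      have h1 : kk < (m : ℕ) := hkm
      have h2 : (m : ℕ) < ll := hml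
      omega
    have hlln : ll < R.length := l.isLt
    set M : List V := (R.drop (kk + 1)).take (ll - kk - 1) with hMdef
    have hMlen : M.length = ll - kk - 1 := by
      simp only [hMdef, List.length_take, List.length_drop]
      omega
    have hMget : ∀ s (hs : s < M.length), M[s] = R[kk + 1 + s]'(by omega) := by
      intro s hs
      simp only [hMdef, List.getElem_take, List.getElem_drop]
    -- the slice of R from kk to ll
    have hslice : (R.drop kk).take (ll - kk + 1) = R.get k :: (M ++ [R.get l]) := by
      have hD : ll - kk - 1 < (R.drop (kk + 1)).length := by
        simp only [List.length_drop]; omega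
      have h2 : (R.drop (kk + 1))[ll - kk - 1]'hD = R.get l := by
        simp only [List.getElem_drop, List.get_eq_getElem]
        congr 1
        omega
      have h3 : (R.drop (kk + 1)).take (ll - kk) = M ++ [R.get l] := by
        have h4 := List.take_concat_get hD
        rw [h2, ← hMdef, List.concat_eq_append] at h4
        rw [show ll - kk = ll - kk - 1 + 1 by omega]
        exact h4.symm
      rw [List.drop_eq_getElem_cons (by omega : kk < R.length),
        show ll - kk + 1 = (ll - kk) + 1 from rfl, List.take_succ_cons, h3]
      simp [List.get_eq_getElem, hkk]
    have hchainL : ((R.drop kk).take (ll - kk + 1)).Chain'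
        (fun u v => N.adj u v = true) := (hchR.drop kk).take _
    rw [hslice] at hchainL
    apply hPuneq
    refine ⟨R.get k, R.get l, M, ?_, hkP, hlP, ?_, hchainL⟩
    · intro h
      have := hMlen
      rw [h] at this
      simp at this
      omega
    · intro y hy
      obtain ⟨s, hs, hsy⟩ := List.mem_iff_getElem.mp hy
      rw [hMget s hs] at hsy
      have hsP := hgap ⟨kk + 1 + s, by omega⟩ (by
          show kk < kk + 1 + s; omega) (by
          show kk + 1 + s < ll; omega)
      intro hyP
      apply hsP
      simpa [List.get_eq_getElem, hsy] using hyP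
  -- degrees at i
  have hadj_i : N.adj (R[(i : ℕ) - 1]'(by have := i.isLt; omega)) (R.get i) = true := by
    have := List.isChain_iff_getElem.mp hchR ((i : ℕ) - 1) (by have := i.isLt; omega)
    simp only [List.get_eq_getElem] at this ⊢
    have hrr : (i : ℕ) - 1 + 1 = (i : ℕ) := by omega
    simp only [hrr] at this
    exact this
  have hprev_notP : R[(i : ℕ) - 1]'(by have := i.isLt; omega) ∉ P := by
    intro hmem
    have := hmin ⟨(i : ℕ) - 1, by have := i.isLt; omega⟩ (by
      simpa [List.get_eq_getElem] using hmem)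
    have : (i : ℕ) ≤ (i : ℕ) - 1 := this
    omega
  have hin1 : 1 ≤ N.inDeg (R.get i) := aux_inDeg_pos N hadj_i
  have hine_head : R.get i ≠ P.head hPne := by
    intro h
    have := (hPsrc hPne).2.1
    rw [← h] at this
    omega
  obtain ⟨u2, hu2P, hu2adj⟩ := aux_pred N hchP hPne hiS hine_head
  have hin2 : 2 ≤ N.inDeg (R.get i) :=
    aux_inDeg_two N hadj_i hu2adj (fun h => hprev_notP (h ▸ hu2P))
  have hib : ¬ N.boundary (R.get i) := by
    intro hb
    have := hvalid.1 _ hb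
    omega
  have hideg : N.inDeg (R.get i) = 2 ∧ N.outDeg (R.get i) = 1 := by
    rcases hvalid.2 _ hib with h | h
    · exact h
    · omega
  -- degrees at j
  have hadj_j : N.adj (R.get j) (R[(j : ℕ) + 1]'(by omega)) = true := by
    have := List.isChain_iff_getElem.mp hchR (j : ℕ) (by omega)
    simpa [List.get_eq_getElem] using this
  have hnext_notP : R[(j : ℕ) + 1]'(by omega) ∉ P := by
    intro hmem
    have := hmax ⟨(j : ℕ) + 1, by omega⟩ (by
      simpa [List.get_eq_getElem] using hmem)
    have : ((j : ℕ) + 1) ≤ (j : ℕ) := this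
    omega
  have hout1 : 1 ≤ N.outDeg (R.get j) := aux_outDeg_pos N hadj_j
  have hjne_last : R.get j ≠ P.getLast hPne := by
    intro h
    have := (hPsnk hPne).2.2
    rw [← h] at this
    omega
  obtain ⟨w2, hw2P, hw2adj⟩ := aux_succ N hchP hPne hjS hjne_last
  have hout2 : 2 ≤ N.outDeg (R.get j) :=
    aux_outDeg_two N hadj_j hw2adj (fun h => hnext_notP (h ▸ hw2P))
  have hjb : ¬ N.boundary (R.get j) := by
    intro hb
    have := hvalid.1 _ hb
    omega
  have hjdeg : N.inDeg (R.get j) = 1 ∧ N.outDeg (R.get j) = 2 := by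
    rcases hvalid.2 _ hjb with h | h
    · omega
    · exact h
  exact ⟨i, j, hij, fun m =>
    ⟨fun hm => ⟨hmin m hm, hmax m hm⟩, fun ⟨h1, h2⟩ => hcont m h1 h2⟩, hideg, hjdeg⟩
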